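/- Let $q$ be a prime power, $n \geq 1$, and let $M : \mathrm{Fin}\,n \to \mathrm{Fin}\,n \to \mathbb{N}$ be a matrix of natural numbers such that every row sum and every column sum of $M$ equals $q$ (i.e., $M$ is the biadjacency matrix of a $q$-regular bipartite multigraph with parts $U$ and $V$ each of size $n$). Let $\alpha : \mathrm{Fin}\,n \to \mathbb{Z}/q\mathbb{Z}$ be an arbitrary assignment. If the permanent of $M$, namely $\sum_{\sigma \in S_n} \prod_{i} M(i, \sigma(i))$, is not congruent to $0$ modulo $q$, then there exists a matrix $N : \mathrm{Fin}\,n \to \mathrm{Fin}\,n \to \mathbb{N}$ with $N(i,j) \leq M(i,j)$ for all $i,j$, such that every row sum of $N$ equals $1$, and for every $j$ the column sum $\sum_i N(i,j)$ is not congruent to $\alpha(j)$ modulo $q$. -/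

import Mathlib

open Finset

private lemma inner_zero {n q : ℕ} (M : Fin n → Fin n → ℕ) (t : Finset (Fin n))
    (g : Fin n → Fin n) (x y : Fin n) (hx : x ∈ t) (hy : y ∈ t) (hxy : x ≠ y)
    (hgxy : g x = g y) :
    ∑ f : Fin n → Fin n, (∏ i, (M i (f i) : ZMod q)) *
        ∏ j ∈ t, (if f (g j) = j then (1 : ZMod q) else 0) = 0 := by
  classical
  refine Finset.sum_eq_zero fun f _ => ?_
  refine mul_eq_zero_of_right _ ?_
  by_cases hfx : f (g x) = x
  · refine Finset.prod_eq_zero hy ?_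
    have : f (g y) = x := by rw [← hgxy]; exact hfx
    rw [this]
    simp [hxy]
  · exact Finset.prod_eq_zero hx (by simp [hfx])

private lemma inner_sum_eval {n q : ℕ} [Nonempty (Fin n)] (M : Fin n → Fin n → ℕ)
    (hrow : ∀ i, ∑ j, M i j = q) (t : Finset (Fin n))
    (g : Fin n → Fin n) (hg : ∀ x ∈ t, ∀ y ∈ t, g x = g y → x = y) :
    ∑ f : Fin n → Fin n, (∏ i, (M i (f i) : ZMod q)) *
        ∏ j ∈ t, (if f (g j) = j then (1 : ZMod q) else 0)
      = ∏ i, (if i ∈ t.image g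
          then (M i (Function.invFunOn g ↑t i) : ZMod q) else (0 : ZMod q)) := by
  classical
  have hrw : ∀ f : Fin n → Fin n,
      (∏ j ∈ t, (if f (g j) = j then (1 : ZMod q) else 0))
        = ∏ i, (if i ∈ t.image g
            then (if f i = Function.invFunOn g ↑t i then (1 : ZMod q) else 0) else 1) := by
    intro f
    rw [← Finset.prod_filter]
    have himg : Finset.univ.filter (fun i => i ∈ t.image g) = t.image g := by
      ext i; simp
    rw [himg, Finset.prod_image hg]
    refine Finset.prod_congr rfl fun j hj => ?_
    have h1 : Function.invFunOn g ↑t (g j) = j := by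
      have hinj : Set.InjOn g ↑t := fun x hx y hy => hg x hx y hy
      exact hinj.leftInvOn_invFunOn hj
    rw [h1]
  calc ∑ f : Fin n → Fin n, (∏ i, (M i (f i) : ZMod q)) *
        ∏ j ∈ t, (if f (g j) = j then (1 : ZMod q) else 0)
      = ∑ f : Fin n → Fin n, ∏ i, ((M i (f i) : ZMod q) *
          (if i ∈ t.image g
            then (if f i = Function.invFunOn g ↑t i then (1 : ZMod q) else 0) else 1)) := by
        refine Finset.sum_congr rfl fun f _ => ?_
        rw [hrw f, Finset.prod_mul_distrib]
    _ = ∑ f ∈ Fintype.piFinset (fun _ : Fin n => (univ : Finset (Fin n))),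
          ∏ i, ((M i (f i) : ZMod q) *
          (if i ∈ t.image g
            then (if f i = Function.invFunOn g ↑t i then (1 : ZMod q) else 0) else 1)) := by
        rw [Fintype.piFinset_univ]
    _ = ∏ i, ∑ v, ((M i v : ZMod q) *
          (if i ∈ t.image g
            then (if v = Function.invFunOn g ↑t i then (1 : ZMod q) else 0) else 1)) := by
        rw [Finset.prod_univ_sum (fun _ : Fin n => (univ : Finset (Fin n)))
          (fun i v => (M i v : ZMod q) *
            (if i ∈ t.image g
              then (if v = Function.invFunOn g ↑t i then (1 : ZMod q) else 0) else 1))]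
    _ = ∏ i, (if i ∈ t.image g
          then (M i (Function.invFunOn g ↑t i) : ZMod q) else (0 : ZMod q)) := by
        refine Finset.prod_congr rfl fun i _ => ?_
        by_cases hi : i ∈ t.image g
        · simp only [hi, if_true, mul_ite, mul_one, mul_zero]
          simp
        · simp only [hi, if_false, mul_one]
          rw [← Nat.cast_sum, hrow i, ZMod.natCast_self]

private lemma key_sum {n q : ℕ} (M : Fin n → Fin n → ℕ)
    (hrow : ∀ i, ∑ j, M i j = q) (i0 : Fin n) (t : Finset (Fin n)) :
    ∑ f : Fin n → Fin n, (∏ i, (M i (f i) : ZMod q)) *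
        ∏ j ∈ t, ((∑ i, if f i = j then 1 else 0 : ℕ) : ZMod q)
      = if t = Finset.univ
          then ∑ σ : Equiv.Perm (Fin n), ∏ i, (M i (σ i) : ZMod q) else 0 := by
  classical
  haveI hne : Nonempty (Fin n) := ⟨i0⟩
  have step1 : ∀ f : Fin n → Fin n,
      (∏ j ∈ t, ((∑ i, if f i = j then 1 else 0 : ℕ) : ZMod q))
        = ∑ g : Fin n → Fin n,
            (∏ j ∈ t, (if f (g j) = j then (1 : ZMod q) else 0)) *
            (∏ j ∈ tᶜ, (if g j = i0 then (1 : ZMod q) else 0)) := by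
    intro f
    have h1 : ∀ j : Fin n,
        (if j ∈ t then ((∑ i, if f i = j then 1 else 0 : ℕ) : ZMod q) else 1)
          = ∑ i, (if j ∈ t then (if f i = j then (1 : ZMod q) else 0)
              else (if i = i0 then 1 else 0)) := by
      intro j
      by_cases hj : j ∈ t
      · simp only [hj, if_true]
        simp only [Nat.cast_sum, Nat.cast_ite, Nat.cast_one, Nat.cast_zero]
      · simp only [hj, if_false]
        simp
    calc (∏ j ∈ t, ((∑ i, if f i = j then 1 else 0 : ℕ) : ZMod q))
        = ∏ j, (if j ∈ t then ((∑ i, if f i = j then 1 else 0 : ℕ) : ZMod q) else 1) := by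
          rw [Finset.prod_ite_mem, Finset.univ_inter]
      _ = ∏ j, ∑ i, (if j ∈ t then (if f i = j then (1 : ZMod q) else 0)
              else (if i = i0 then 1 else 0)) := Finset.prod_congr rfl fun j _ => h1 j
      _ = ∑ g ∈ Fintype.piFinset (fun _ : Fin n => (univ : Finset (Fin n))),
            ∏ j, (if j ∈ t then (if f (g j) = j then (1 : ZMod q) else 0)
              else (if g j = i0 then 1 else 0)) := Finset.prod_univ_sum _ _
      _ = ∑ g : Fin n → Fin n,
            (∏ j ∈ t, (if f (g j) = j then (1 : ZMod q) else 0)) *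
            (∏ j ∈ tᶜ, (if g j = i0 then (1 : ZMod q) else 0)) := by
          rw [Fintype.piFinset_univ]
          refine Finset.sum_congr rfl fun g _ => ?_
          rw [← Finset.prod_mul_prod_compl t]
          congr 1
          · exact Finset.prod_congr rfl fun j hj => by simp [hj]
          · exact Finset.prod_congr rfl fun j hj => by
              simp only [Finset.mem_compl] at hj; simp [hj]
  have step2 : ∑ f : Fin n → Fin n, (∏ i, (M i (f i) : ZMod q)) *
        ∏ j ∈ t, ((∑ i, if f i = j then 1 else 0 : ℕ) : ZMod q)
      = ∑ g : Fin n → Fin n,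
          (∑ f : Fin n → Fin n, (∏ i, (M i (f i) : ZMod q)) *
            ∏ j ∈ t, (if f (g j) = j then (1 : ZMod q) else 0)) *
          (∏ j ∈ tᶜ, (if g j = i0 then (1 : ZMod q) else 0)) := by
    calc ∑ f : Fin n → Fin n, (∏ i, (M i (f i) : ZMod q)) *
          ∏ j ∈ t, ((∑ i, if f i = j then 1 else 0 : ℕ) : ZMod q)
        = ∑ f : Fin n → Fin n, ∑ g : Fin n → Fin n,
            ((∏ i, (M i (f i) : ZMod q)) *
              ∏ j ∈ t, (if f (g j) = j then (1 : ZMod q) else 0)) *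
            (∏ j ∈ tᶜ, (if g j = i0 then (1 : ZMod q) else 0)) := by
          refine Finset.sum_congr rfl fun f _ => ?_
          rw [step1 f, Finset.mul_sum]
          exact Finset.sum_congr rfl fun g _ => by ring
      _ = ∑ g : Fin n → Fin n, ∑ f : Fin n → Fin n,
            ((∏ i, (M i (f i) : ZMod q)) *
              ∏ j ∈ t, (if f (g j) = j then (1 : ZMod q) else 0)) *
            (∏ j ∈ tᶜ, (if g j = i0 then (1 : ZMod q) else 0)) := Finset.sum_comm
      _ = _ := Finset.sum_congr rfl fun g _ => (Finset.sum_mul _ _ _).symm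
  rw [step2]
  by_cases ht : t = Finset.univ
  · subst ht
    rw [if_pos rfl]
    simp only [compl_univ, Finset.prod_empty, mul_one]
    have hterm : ∀ g : Fin n → Fin n,
        (∑ f : Fin n → Fin n, (∏ i, (M i (f i) : ZMod q)) *
          ∏ j ∈ (Finset.univ : Finset (Fin n)),
            (if f (g j) = j then (1 : ZMod q) else 0))
        = if Function.Injective g
            then ∏ i, (M i (Function.invFunOn g
              ↑(Finset.univ : Finset (Fin n)) i) : ZMod q)
            else 0 := by
      intro g
      by_cases hg : Function.Injective g
      · rw [if_pos hg]
        rw [inner_sum_eval M hrow Finset.univ g (fun x _ y _ h => hg h)]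
        have himg : (Finset.univ : Finset (Fin n)).image g = Finset.univ :=
          Finset.image_univ_of_surjective (Finite.injective_iff_surjective.mp hg)
        refine Finset.prod_congr rfl fun i _ => ?_
        rw [if_pos (by rw [himg]; exact Finset.mem_univ i)]
      · rw [if_neg hg]
        rw [Function.not_injective_iff] at hg
        obtain ⟨x, y, hxy, hne2⟩ := hg
        exact inner_zero M Finset.univ g x y (Finset.mem_univ x) (Finset.mem_univ y) hne2 hxy
    have himg2 : Finset.univ.filter (fun g : Fin n → Fin n => Function.Injective g)
        = Finset.image (fun σ : Equiv.Perm (Fin n) => ⇑σ) Finset.univ := by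
      ext g
      simp only [Finset.mem_filter, Finset.mem_univ, true_and, Finset.mem_image]
      constructor
      · intro hg
        exact ⟨Equiv.ofBijective g (Finite.injective_iff_bijective.mp hg), rfl⟩
      · rintro ⟨σ, _, rfl⟩
        exact σ.injective
    calc ∑ g : Fin n → Fin n,
          (∑ f : Fin n → Fin n, (∏ i, (M i (f i) : ZMod q)) *
            ∏ j ∈ (Finset.univ : Finset (Fin n)),
              (if f (g j) = j then (1 : ZMod q) else 0))
        = ∑ g : Fin n → Fin n, (if Function.Injective g
            then ∏ i, (M i (Function.invFunOn g
              ↑(Finset.univ : Finset (Fin n)) i) : ZMod q)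
            else 0) := Finset.sum_congr rfl fun g _ => hterm g
      _ = ∑ g ∈ Finset.univ.filter (fun g : Fin n → Fin n => Function.Injective g),
            (if Function.Injective g
            then ∏ i, (M i (Function.invFunOn g
              ↑(Finset.univ : Finset (Fin n)) i) : ZMod q)
            else 0) := by
          refine (Finset.sum_filter_of_ne fun g _ hne2 => ?_).symm
          by_contra hni
          exact hne2 (by rw [if_neg hni])
      _ = ∑ σ : Equiv.Perm (Fin n), ∏ i, (M i (σ.symm i) : ZMod q) := by
          rw [himg2, Finset.sum_image (fun σ _ τ _ h => Equiv.coe_fn_injective h)]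
          refine Finset.sum_congr rfl fun σ _ => ?_
          rw [if_pos σ.injective]
          refine Finset.prod_congr rfl fun i _ => ?_
          have hmem : ∃ a ∈ (↑(Finset.univ : Finset (Fin n)) : Set (Fin n)), σ a = i :=
            ⟨σ.symm i, by simp, by simp⟩
          have h2 : σ (Function.invFunOn (⇑σ) ↑(Finset.univ : Finset (Fin n)) i) = i :=
            Function.invFunOn_eq hmem
          have h3 : Function.invFunOn (⇑σ) ↑(Finset.univ : Finset (Fin n)) i = σ.symm i :=
            σ.injective (by rw [h2]; simp)
          rw [h3]
      _ = ∑ σ : Equiv.Perm (Fin n), ∏ i, (M i (σ i) : ZMod q) := by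
          refine Fintype.sum_bijective (fun σ : Equiv.Perm (Fin n) => σ⁻¹)
            (Function.Involutive.bijective fun σ => by simp) _ _ fun σ => ?_
          refine Finset.prod_congr rfl fun i _ => ?_
          rfl
  · rw [if_neg ht]
    refine Finset.sum_eq_zero fun g _ => ?_
    refine mul_eq_zero_of_left ?_ _
    by_cases hg : ∀ x ∈ t, ∀ y ∈ t, g x = g y → x = y
    · rw [inner_sum_eval M hrow t g hg]
      have : ∃ i : Fin n, i ∉ t.image g := by
        by_contra hall
        push_neg at hall
        have hsub : (Finset.univ : Finset (Fin n)) ⊆ t.image g := fun i _ => hall i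
        have hcard := Finset.card_le_card hsub
        have h2 : (t.image g).card ≤ t.card := Finset.card_image_le
        have h3 : t.card < (Finset.univ : Finset (Fin n)).card :=
          Finset.card_lt_card (Finset.ssubset_univ_iff.mpr ht)
        omega
      obtain ⟨i, hi⟩ := this
      exact Finset.prod_eq_zero (Finset.mem_univ i) (by rw [if_neg hi])
    · push_neg at hg
      obtain ⟨x, hx, y, hy, hgxy, hne2⟩ := hg
      exact inner_zero M t g x y hx hy hne2 hgxy

theorem antifactor_bipartite_multigraph
    (q n : ℕ) (hq : IsPrimePow q) (hn : 1 ≤ n)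
    (M : Fin n → Fin n → ℕ)
    (hrow : ∀ i, ∑ j, M i j = q)
    (hcol : ∀ j, ∑ i, M i j = q)
    (α : Fin n → ZMod q)
    (hpm : ((∑ σ : Equiv.Perm (Fin n), ∏ i, M i (σ i) : ℕ) : ZMod q) ≠ 0) :
    ∃ N : Fin n → Fin n → ℕ,
      (∀ i j, N i j ≤ M i j) ∧
      (∀ i, ∑ j, N i j = 1) ∧
      (∀ j, ((∑ i, N i j : ℕ) : ZMod q) ≠ α j) := by
  classical
  by_contra hcon
  push_neg at hcon
  set i0 : Fin n := ⟨0, hn⟩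
  have hterm0 : ∀ f : Fin n → Fin n,
      (∏ i, (M i (f i) : ZMod q)) *
        ∏ j, (((∑ i, if f i = j then 1 else 0 : ℕ) : ZMod q) - α j) = 0 := by
    intro f
    by_cases hM : ∀ i, 0 < M i (f i)
    · obtain ⟨j, hj⟩ := hcon (fun i j => if f i = j then 1 else 0)
        (fun i j => by
          by_cases h : f i = j
          · simpa [h, Nat.one_le_iff_ne_zero, Nat.pos_iff_ne_zero] using hM i
          · simp [h])
        (fun i => by rw [Finset.sum_ite_eq univ (f i) (fun _ => (1:ℕ))]; simp)
      refine mul_eq_zero_of_right _ (Finset.prod_eq_zero (Finset.mem_univ j) ?_)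
      rw [show ((∑ i, if f i = j then 1 else 0 : ℕ) : ZMod q) = α j from hj, sub_self]
    · push_neg at hM
      obtain ⟨i, hi⟩ := hM
      refine mul_eq_zero_of_left (Finset.prod_eq_zero (Finset.mem_univ i) ?_) _
      rw [Nat.le_zero.mp hi]
      simp
  have hmain : ∑ f : Fin n → Fin n, (∏ i, (M i (f i) : ZMod q)) *
        ∏ j, (((∑ i, if f i = j then 1 else 0 : ℕ) : ZMod q) - α j)
      = ∑ σ : Equiv.Perm (Fin n), ∏ i, (M i (σ i) : ZMod q) := by
    calc ∑ f : Fin n → Fin n, (∏ i, (M i (f i) : ZMod q)) *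
          ∏ j, (((∑ i, if f i = j then 1 else 0 : ℕ) : ZMod q) - α j)
        = ∑ f : Fin n → Fin n, ∑ t ∈ (univ : Finset (Fin n)).powerset,
            ((∏ i, (M i (f i) : ZMod q)) *
              ∏ j ∈ t, ((∑ i, if f i = j then 1 else 0 : ℕ) : ZMod q)) *
            ∏ j ∈ univ \ t, (-α j) := by
          refine Finset.sum_congr rfl fun f _ => ?_
          rw [show ∏ j, (((∑ i, if f i = j then 1 else 0 : ℕ) : ZMod q) - α j)
              = ∏ j, (((∑ i, if f i = j then 1 else 0 : ℕ) : ZMod q) + (-α j)) from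
            Finset.prod_congr rfl fun j _ => by ring]
          rw [Finset.prod_add, Finset.mul_sum]
          exact Finset.sum_congr rfl fun t _ => by ring
      _ = ∑ t ∈ (univ : Finset (Fin n)).powerset,
            (∑ f : Fin n → Fin n, (∏ i, (M i (f i) : ZMod q)) *
              ∏ j ∈ t, ((∑ i, if f i = j then 1 else 0 : ℕ) : ZMod q)) *
            ∏ j ∈ univ \ t, (-α j) := by
          rw [Finset.sum_comm]
          exact Finset.sum_congr rfl fun t _ => (Finset.sum_mul _ _ _).symm
      _ = ∑ σ : Equiv.Perm (Fin n), ∏ i, (M i (σ i) : ZMod q) := by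
          rw [Finset.sum_eq_single_of_mem Finset.univ
            (Finset.mem_powerset_self _)]
          · rw [key_sum M hrow i0 Finset.univ, if_pos rfl]
            simp
          · intro t _ htne
            rw [key_sum M hrow i0 t, if_neg htne, zero_mul]
  apply hpm
  push_cast
  rw [← hmain]
  exact Finset.sum_eq_zero fun f _ => hterm0 f
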